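/- Let B and C be disjoint finite sets, p : B ∪ C → ℝ_{≥0}, and d : B → ℕ. Suppose that for every e ∈ B: (1) |{f ∈ C : p_f ≥ p_e}| ≥ d_e, and (2) |{f ∈ B : d_f ≤ d_e}| ≤ d_e. Then Σ_{e ∈ B} p_e ≤ Σ_{f ∈ C} p_f, and consequently Σ_{e ∈ B ∪ C} p_e ≤ 2·Σ_{f ∈ C} p_f. -/

import Mathlib

open Finset

/-- Factor-2 loss for probing with deadlines: if every `e ∈ B` has at least `d e`
elements of `C` with probability at least `p e`, and at most `d e` elements of `B` have
deadline at most `d e`, then `Σ_{e ∈ B} p e ≤ Σ_{f ∈ C} p f`, and consequently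
`Σ_{e ∈ B ∪ C} p e ≤ 2·Σ_{f ∈ C} p f`. -/
theorem deadline_factor_two {V : Type*} [DecidableEq V]
    (B C : Finset V) (hdisj : Disjoint B C)
    (p : V → ℝ) (hp0 : ∀ e ∈ B ∪ C, 0 ≤ p e) (d : V → ℕ)
    (h1 : ∀ e ∈ B, d e ≤ (C.filter (fun f => p e ≤ p f)).card)
    (h2 : ∀ e ∈ B, (B.filter (fun f => d f ≤ d e)).card ≤ d e) :
    (∑ e ∈ B, p e ≤ ∑ f ∈ C, p f) ∧ (∑ e ∈ B ∪ C, p e ≤ 2 * ∑ f ∈ C, p f) := by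
  classical
  set t : {x // x ∈ B} → Finset V := fun e => C.filter (fun f => p e.1 ≤ p f) with ht
  have hall : ∀ s : Finset {x // x ∈ B}, s.card ≤ (s.biUnion t).card := by
    intro s
    rcases s.eq_empty_or_nonempty with rfl | hs
    · simp
    · -- pick element of s with max deadline
      obtain ⟨e, he, hemax⟩ := s.exists_max_image (fun e => d e.1) hs
      have hcard1 : s.card ≤ (B.filter (fun f => d f ≤ d e.1)).card := by
        apply Finset.card_le_card_of_injOn (fun x => x.1)
        · intro x hx
          simp only [mem_filter]
          exact Finset.mem_filter.mpr ⟨x.2, hemax x hx⟩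
        · intro x _ y _ h; exact Subtype.ext h
      have hsub : t e ⊆ s.biUnion t := Finset.subset_biUnion_of_mem t he
      calc s.card ≤ d e.1 := hcard1.trans (h2 e.1 e.2)
        _ ≤ (t e).card := h1 e.1 e.2
        _ ≤ (s.biUnion t).card := Finset.card_le_card hsub
  obtain ⟨f, hfinj, hf⟩ := (Finset.all_card_le_biUnion_card_iff_exists_injective t).mp hall
  have hmem : ∀ x : {x // x ∈ B}, f x ∈ C ∧ p x.1 ≤ p (f x) := by
    intro x
    have := hf x
    simp only [ht, mem_filter] at this
    exact this
  have key : ∑ e ∈ B, p e ≤ ∑ f ∈ C, p f := by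
    have h1' : ∑ e ∈ B, p e = ∑ x ∈ B.attach, p x.1 := (Finset.sum_attach B p).symm
    have h2' : ∑ x ∈ B.attach, p x.1 ≤ ∑ x ∈ B.attach, p (f x) :=
      Finset.sum_le_sum (fun x _ => (hmem x).2)
    have h3' : ∑ x ∈ B.attach, p (f x) = ∑ y ∈ B.attach.image f, p y :=
      (Finset.sum_image (fun x _ y _ h => hfinj h)).symm
    have h4' : ∑ y ∈ B.attach.image f, p y ≤ ∑ y ∈ C, p y := by
      apply Finset.sum_le_sum_of_subset_of_nonneg
      · intro y hy
        obtain ⟨x, _, rfl⟩ := Finset.mem_image.mp hy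
        exact (hmem x).1
      · intro y hy _
        exact hp0 y (Finset.mem_union_right B hy)
    linarith
  refine ⟨key, ?_⟩
  rw [Finset.sum_union hdisj]
  linarith
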